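/- For all z, w ∈ ℂ one has |𝐅(z,w)| ≤ e^{−|z−w|²/2} + e^{−(Re(z−w))²/2}·(1/√π)·F(|Im(z−w)|/√2), where F is Dawson's function. Moreover, there is a constant C such that |z−w|·|𝐅(z,w)| ≤ C for all z, w ∈ ℂ; in particular 𝐅(z,w) → 0 as |z−w| → ∞. -/

import Mathlib

open MeasureTheory Filter

/-- The entire function `Φ(z) = 1/2 + (2π)^{−1/2} z ∫₀¹ e^{−z²t²/2} dt`, the analytic
continuation to `ℂ` of the standard normal distribution function. -/
noncomputable def PhiC (z : ℂ) : ℂ :=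
  1 / 2 + ((Real.sqrt (2 * Real.pi))⁻¹ : ℝ) * z *
    ∫ t in (0 : ℝ)..1, Complex.exp (-z ^ 2 * (t : ℂ) ^ 2 / 2)

/-- The Ginibre(∞) boundary kernel `𝐅(z,w) = e^{z w̄ − |z|²/2 − |w|²/2} Φ(−z − w̄)`. -/
noncomputable def Fkern (z w : ℂ) : ℂ :=
  Complex.exp (z * (starRingEnd ℂ) w - ((‖z‖ : ℝ) : ℂ) ^ 2 / 2 -
    ((‖w‖ : ℝ) : ℂ) ^ 2 / 2) * PhiC (-z - (starRingEnd ℂ) w)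

/-- Dawson's function `F(t) = e^{−t²} ∫₀ᵗ e^{x²} dx`. -/
noncomputable def dawson (t : ℝ) : ℝ :=
  Real.exp (-t ^ 2) * ∫ x in (0 : ℝ)..t, Real.exp (x ^ 2)

lemma abs_exp_factor (z w : ℂ) :
    ‖(Complex.exp (z * (starRingEnd ℂ) w - ((‖z‖ : ℝ) : ℂ) ^ 2 / 2 -
      ((‖w‖ : ℝ) : ℂ) ^ 2 / 2))‖ = Real.exp (-(‖(z - w)‖) ^ 2 / 2) := by
  rw [Complex.norm_exp]
  congr 1
  have h1 : (‖(z - w)‖) ^ 2 = (z.re - w.re)^2 + (z.im - w.im)^2 := by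
    rw [Complex.sq_norm, Complex.normSq_apply]; simp [Complex.sub_re, Complex.sub_im]; ring
  simp only [Complex.sub_re, Complex.mul_re, Complex.conj_re, Complex.conj_im,
    Complex.div_re, Complex.ofReal_re, Complex.ofReal_im]
  rw [h1]
  have h2 : ((‖z‖ : ℝ) : ℂ)^2 = ((‖z‖ ^2 : ℝ) : ℂ) := by push_cast; ring
  have h3 : ((‖w‖ : ℝ) : ℂ)^2 = ((‖w‖ ^2 : ℝ) : ℂ) := by push_cast; ring
  rw [h2, h3]
  simp [Complex.sq_norm, Complex.normSq_apply]
  ring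

lemma hasDerivAt_gauss (c u : ℂ) :
    HasDerivAt (fun u : ℂ => u * Complex.exp (-c ^ 2 * u ^ 2 / 2))
      ((1 - c ^ 2 * u ^ 2) * Complex.exp (-c ^ 2 * u ^ 2 / 2)) u := by
  have h1 : HasDerivAt (fun u : ℂ => -c ^ 2 * u ^ 2 / 2) (-c ^ 2 * u) u := by
    have := ((hasDerivAt_pow 2 u).const_mul (-c ^ 2)).div_const 2
    refine this.congr_deriv ?_
    norm_num
    ring
  have h2 := h1.cexp
  have h3 := (hasDerivAt_id u).mul h2
  refine h3.congr_deriv ?_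
  simp only [id]
  ring

lemma aux_inner (c : ℂ) :
    ∫ t in (0:ℝ)..1, (1 - c ^ 2 * (t:ℂ) ^ 2) * Complex.exp (-c ^ 2 * (t:ℂ) ^ 2 / 2)
      = Complex.exp (-c ^ 2 / 2) := by
  have h : ∀ t ∈ Set.uIcc (0:ℝ) 1,
      HasDerivAt (fun t : ℝ => (t:ℂ) * Complex.exp (-c ^ 2 * (t:ℂ) ^ 2 / 2))
        ((1 - c ^ 2 * (t:ℂ) ^ 2) * Complex.exp (-c ^ 2 * (t:ℂ) ^ 2 / 2)) t := by
    intro t _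
    exact (hasDerivAt_gauss c (t:ℂ)).comp_ofReal
  have hint : IntervalIntegrable
      (fun t : ℝ => (1 - c ^ 2 * (t:ℂ) ^ 2) * Complex.exp (-c ^ 2 * (t:ℂ) ^ 2 / 2))
      volume 0 1 := by
    apply Continuous.intervalIntegrable
    fun_prop
  have := intervalIntegral.integral_eq_sub_of_hasDerivAt h hint
  rw [this]
  norm_num

lemma hasDerivAt_gauss' (c u : ℂ) :
    HasDerivAt (fun u : ℂ => u * Complex.exp (-u ^ 2 * c ^ 2 / 2))
      ((1 - u ^ 2 * c ^ 2) * Complex.exp (-u ^ 2 * c ^ 2 / 2)) u := by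
  have h1 : HasDerivAt (fun u : ℂ => -u ^ 2 * c ^ 2 / 2) (-u * c ^ 2) u := by
    have := ((hasDerivAt_pow 2 u).const_mul (-c ^ 2 / 2))
    refine (this.congr_deriv ?_).congr_of_eventuallyEq (Filter.Eventually.of_forall fun v => ?_)
    · norm_num
      ring
    · ring
  have h3 := (hasDerivAt_id u).mul h1.cexp
  refine h3.congr_deriv ?_
  simp only [id]
  ring

lemma path_step (x y t : ℝ) :
    (((x:ℂ) + (y:ℂ) * Complex.I) *
        Complex.exp (-((x:ℂ) + (y:ℂ) * Complex.I) ^ 2 * (t:ℂ) ^ 2 / 2))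
      - (x:ℂ) * Complex.exp (-(x:ℂ) ^ 2 * (t:ℂ) ^ 2 / 2)
    = ∫ r in (0:ℝ)..1, ((y:ℂ) * Complex.I) *
        ((1 - ((x:ℂ) + (r:ℂ) * ((y:ℂ) * Complex.I)) ^ 2 * (t:ℂ) ^ 2) *
          Complex.exp (-((x:ℂ) + (r:ℂ) * ((y:ℂ) * Complex.I)) ^ 2 * (t:ℂ) ^ 2 / 2)) := by
  have h : ∀ r ∈ Set.uIcc (0:ℝ) 1,
      HasDerivAt (fun r : ℝ => ((x:ℂ) + (r:ℂ) * ((y:ℂ) * Complex.I)) *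
          Complex.exp (-((x:ℂ) + (r:ℂ) * ((y:ℂ) * Complex.I)) ^ 2 * (t:ℂ) ^ 2 / 2))
        (((y:ℂ) * Complex.I) *
          ((1 - ((x:ℂ) + (r:ℂ) * ((y:ℂ) * Complex.I)) ^ 2 * (t:ℂ) ^ 2) *
            Complex.exp (-((x:ℂ) + (r:ℂ) * ((y:ℂ) * Complex.I)) ^ 2 * (t:ℂ) ^ 2 / 2))) r := by
    intro r _
    have hL : HasDerivAt (fun u : ℂ => (x:ℂ) + u * ((y:ℂ) * Complex.I)) ((y:ℂ) * Complex.I)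
        (r:ℂ) := by
      simpa using ((hasDerivAt_id (r:ℂ)).mul_const ((y:ℂ) * Complex.I)).const_add (x:ℂ)
    have := (hasDerivAt_gauss' (t:ℂ) ((x:ℂ) + (r:ℂ) * ((y:ℂ) * Complex.I))).comp (r:ℂ) hL
    have h2 := this.comp_ofReal
    refine h2.congr_deriv ?_
    ring
  have hint : IntervalIntegrable (fun r : ℝ => ((y:ℂ) * Complex.I) *
        ((1 - ((x:ℂ) + (r:ℂ) * ((y:ℂ) * Complex.I)) ^ 2 * (t:ℂ) ^ 2) *
          Complex.exp (-((x:ℂ) + (r:ℂ) * ((y:ℂ) * Complex.I)) ^ 2 * (t:ℂ) ^ 2 / 2)))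
      volume 0 1 := by
    apply Continuous.intervalIntegrable
    fun_prop
  have := intervalIntegral.integral_eq_sub_of_hasDerivAt h hint
  rw [this]
  norm_num

lemma interval_swap {f : ℝ → ℝ → ℂ} (hf : Continuous (Function.uncurry f)) :
    (∫ t in (0:ℝ)..1, ∫ r in (0:ℝ)..1, f r t) = ∫ r in (0:ℝ)..1, ∫ t in (0:ℝ)..1, f r t := by
  have h01 : (0:ℝ) ≤ 1 := zero_le_one
  have key : Integrable (Function.uncurry (fun t r => f r t))
      ((volume.restrict (Set.Ioc (0:ℝ) 1)).prod (volume.restrict (Set.Ioc (0:ℝ) 1))) := by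
    rw [Measure.prod_restrict]
    apply MeasureTheory.IntegrableOn.mono_set
      (t := Set.Icc (0:ℝ) 1 ×ˢ Set.Icc (0:ℝ) 1)
    · apply ContinuousOn.integrableOn_compact (isCompact_Icc.prod isCompact_Icc)
      apply Continuous.continuousOn
      have : Function.uncurry (fun t r => f r t) = Function.uncurry f ∘ Prod.swap := rfl
      rw [this]
      exact hf.comp continuous_swap
    · exact Set.prod_mono Set.Ioc_subset_Icc_self Set.Ioc_subset_Icc_self
  calc (∫ t in (0:ℝ)..1, ∫ r in (0:ℝ)..1, f r t)
      = ∫ t in Set.Ioc (0:ℝ) 1, ∫ r in Set.Ioc (0:ℝ) 1, f r t := by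
        rw [intervalIntegral.integral_of_le h01]
        congr 1; funext t
        rw [intervalIntegral.integral_of_le h01]
    _ = ∫ r in Set.Ioc (0:ℝ) 1, ∫ t in Set.Ioc (0:ℝ) 1, f r t :=
        MeasureTheory.integral_integral_swap key
    _ = ∫ r in (0:ℝ)..1, ∫ t in (0:ℝ)..1, f r t := by
        rw [intervalIntegral.integral_of_le h01]
        congr 1; funext r
        rw [intervalIntegral.integral_of_le h01]

lemma g_diff (x y : ℝ) :
    (((x:ℂ) + (y:ℂ) * Complex.I) *
        ∫ t in (0:ℝ)..1, Complex.exp (-((x:ℂ) + (y:ℂ) * Complex.I) ^ 2 * (t:ℂ) ^ 2 / 2))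
      - ((x:ℂ) * ∫ t in (0:ℝ)..1, Complex.exp (-(x:ℂ) ^ 2 * (t:ℂ) ^ 2 / 2))
    = ((y:ℂ) * Complex.I) *
        ∫ r in (0:ℝ)..1, Complex.exp (-((x:ℂ) + (r:ℂ) * ((y:ℂ) * Complex.I)) ^ 2 / 2) := by
  set F : ℝ → ℝ → ℂ := fun r t => ((y:ℂ) * Complex.I) *
      ((1 - ((x:ℂ) + (r:ℂ) * ((y:ℂ) * Complex.I)) ^ 2 * (t:ℂ) ^ 2) *
        Complex.exp (-((x:ℂ) + (r:ℂ) * ((y:ℂ) * Complex.I)) ^ 2 * (t:ℂ) ^ 2 / 2)) with hF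
  have hFc : Continuous (Function.uncurry F) := by
    have : Function.uncurry F = fun p : ℝ × ℝ => ((y:ℂ) * Complex.I) *
        ((1 - ((x:ℂ) + (p.1:ℂ) * ((y:ℂ) * Complex.I)) ^ 2 * (p.2:ℂ) ^ 2) *
          Complex.exp (-((x:ℂ) + (p.1:ℂ) * ((y:ℂ) * Complex.I)) ^ 2 * (p.2:ℂ) ^ 2 / 2)) := rfl
    rw [this]; fun_prop
  have step1 : (((x:ℂ) + (y:ℂ) * Complex.I) *
        ∫ t in (0:ℝ)..1, Complex.exp (-((x:ℂ) + (y:ℂ) * Complex.I) ^ 2 * (t:ℂ) ^ 2 / 2))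
      - ((x:ℂ) * ∫ t in (0:ℝ)..1, Complex.exp (-(x:ℂ) ^ 2 * (t:ℂ) ^ 2 / 2))
      = ∫ t in (0:ℝ)..1, (((x:ℂ) + (y:ℂ) * Complex.I) *
          Complex.exp (-((x:ℂ) + (y:ℂ) * Complex.I) ^ 2 * (t:ℂ) ^ 2 / 2)
          - (x:ℂ) * Complex.exp (-(x:ℂ) ^ 2 * (t:ℂ) ^ 2 / 2)) := by
    rw [intervalIntegral.integral_sub]
    · rw [intervalIntegral.integral_const_mul, intervalIntegral.integral_const_mul]
    · apply Continuous.intervalIntegrable; fun_prop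
    · apply Continuous.intervalIntegrable; fun_prop
  rw [step1]
  have step2 : (∫ t in (0:ℝ)..1, (((x:ℂ) + (y:ℂ) * Complex.I) *
          Complex.exp (-((x:ℂ) + (y:ℂ) * Complex.I) ^ 2 * (t:ℂ) ^ 2 / 2)
          - (x:ℂ) * Complex.exp (-(x:ℂ) ^ 2 * (t:ℂ) ^ 2 / 2)))
      = ∫ t in (0:ℝ)..1, ∫ r in (0:ℝ)..1, F r t := by
    congr 1; funext t
    exact path_step x y t
  rw [step2, interval_swap hFc]
  have step3 : ∀ r : ℝ, (∫ t in (0:ℝ)..1, F r t)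
      = ((y:ℂ) * Complex.I) * Complex.exp (-((x:ℂ) + (r:ℂ) * ((y:ℂ) * Complex.I)) ^ 2 / 2) := by
    intro r
    rw [hF]
    rw [intervalIntegral.integral_const_mul]
    rw [aux_inner ((x:ℂ) + (r:ℂ) * ((y:ℂ) * Complex.I))]
  calc (∫ r in (0:ℝ)..1, ∫ t in (0:ℝ)..1, F r t)
      = ∫ r in (0:ℝ)..1, ((y:ℂ) * Complex.I) *
          Complex.exp (-((x:ℂ) + (r:ℂ) * ((y:ℂ) * Complex.I)) ^ 2 / 2) := by
        congr 1; funext r; exact step3 r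
    _ = ((y:ℂ) * Complex.I) *
        ∫ r in (0:ℝ)..1, Complex.exp (-((x:ℂ) + (r:ℂ) * ((y:ℂ) * Complex.I)) ^ 2 / 2) := by
        rw [intervalIntegral.integral_const_mul]

lemma gauss_int_nonneg_bound {x : ℝ} (hx : 0 ≤ x) :
    (∫ u in (0:ℝ)..x, Real.exp (-u^2/2)) ≤ Real.sqrt (2*Real.pi)/2 := by
  have hint : IntegrableOn (fun u : ℝ => Real.exp (-(1/2) * u^2)) (Set.Ioi 0) volume :=
    (integrable_exp_neg_mul_sq (by norm_num : (0:ℝ) < 1/2)).integrableOn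
  have heq : (fun u : ℝ => Real.exp (-u^2/2)) = fun u : ℝ => Real.exp (-(1/2) * u^2) := by
    funext u; ring_nf
  rw [intervalIntegral.integral_of_le hx, heq]
  calc (∫ u in Set.Ioc 0 x, Real.exp (-(1/2) * u^2))
      ≤ ∫ u in Set.Ioi 0, Real.exp (-(1/2) * u^2) := by
        apply setIntegral_mono_set hint
        · filter_upwards with u using (Real.exp_pos _).le
        · exact HasSubset.Subset.eventuallyLE Set.Ioc_subset_Ioi_self
    _ = Real.sqrt (Real.pi / (1/2)) / 2 := integral_gaussian_Ioi (1/2)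
    _ = Real.sqrt (2*Real.pi)/2 := by norm_num [mul_comm]

lemma gauss_int_abs_bound (x : ℝ) :
    |∫ u in (0:ℝ)..x, Real.exp (-u^2/2)| ≤ Real.sqrt (2*Real.pi)/2 := by
  rcases le_or_gt 0 x with hx | hx
  · rw [abs_of_nonneg (intervalIntegral.integral_nonneg hx (fun u _ => (Real.exp_pos _).le))]
    exact gauss_int_nonneg_bound hx
  · have h1 : (∫ u in (0:ℝ)..x, Real.exp (-u^2/2))
        = -∫ u in (0:ℝ)..(-x), Real.exp (-u^2/2) := by
      rw [← intervalIntegral.integral_symm]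
      rw [← neg_neg (0:ℝ), ← intervalIntegral.integral_comp_neg (fun u => Real.exp (-u^2/2))]
      simp [neg_neg]
    rw [h1, abs_neg,
      abs_of_nonneg (intervalIntegral.integral_nonneg (by linarith) (fun u _ => (Real.exp_pos _).le))]
    exact gauss_int_nonneg_bound (by linarith)

lemma mul_int_eq (x : ℝ) :
    x * ∫ t in (0:ℝ)..1, Real.exp (-x^2*t^2/2) = ∫ u in (0:ℝ)..x, Real.exp (-u^2/2) := by
  rcases eq_or_ne x 0 with h | h
  · simp [h]
  · have := intervalIntegral.integral_comp_mul_left (fun u => Real.exp (-u^2/2)) h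
      (a := (0:ℝ)) (b := 1)
    have heq : (fun t : ℝ => Real.exp (-(x*t)^2/2)) = fun t : ℝ => Real.exp (-x^2*t^2/2) := by
      funext t; ring_nf
    rw [heq] at this
    rw [this]
    rw [mul_zero, mul_one, smul_eq_mul, ← mul_assoc, mul_inv_cancel₀ h, one_mul]

lemma phiC_real_eq (x : ℝ) :
    PhiC (x:ℂ) = (((1:ℝ)/2 + (Real.sqrt (2*Real.pi))⁻¹ *
      ∫ u in (0:ℝ)..x, Real.exp (-u^2/2) : ℝ) : ℂ) := by
  unfold PhiC
  have h1 : (fun t : ℝ => Complex.exp (-(x:ℂ)^2 * (t:ℂ)^2/2))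
      = fun t : ℝ => ((Real.exp (-x^2*t^2/2) : ℝ) : ℂ) := by
    funext t
    rw [Complex.ofReal_exp]
    congr 1
    push_cast
    ring
  rw [h1, intervalIntegral.integral_ofReal, ← mul_int_eq]
  push_cast
  ring

lemma phiC_real_bound (x : ℝ) : ‖(PhiC (x:ℂ))‖ ≤ 1 := by
  rw [phiC_real_eq, Complex.norm_real, Real.norm_eq_abs]
  have h2 : (0:ℝ) < Real.sqrt (2*Real.pi) :=
    Real.sqrt_pos.2 (by positivity)
  have h3 := gauss_int_abs_bound x
  rw [abs_le] at h3
  have h4 : (Real.sqrt (2*Real.pi))⁻¹ * (Real.sqrt (2*Real.pi)/2) = 1/2 := by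
    field_simp
  have hub : (Real.sqrt (2*Real.pi))⁻¹ * (∫ u in (0:ℝ)..x, Real.exp (-u^2/2)) ≤ 1/2 := by
    rw [← h4]
    exact mul_le_mul_of_nonneg_left h3.2 (inv_pos.2 h2).le
  have hlb : -(1/2 : ℝ) ≤ (Real.sqrt (2*Real.pi))⁻¹ * (∫ u in (0:ℝ)..x, Real.exp (-u^2/2)) := by
    have := mul_le_mul_of_nonneg_left h3.1 (inv_pos.2 h2).le
    nlinarith
  rw [abs_le]
  constructor <;> [linarith; linarith]

lemma abs_exp_path (x y r : ℝ) :
    ‖(Complex.exp (-((x:ℂ) + (r:ℂ) * ((y:ℂ) * Complex.I)) ^ 2 / 2))‖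
      = Real.exp ((r^2*y^2 - x^2)/2) := by
  rw [Complex.norm_exp]
  congr 1
  have h : -((x:ℂ) + (r:ℂ) * ((y:ℂ) * Complex.I)) ^ 2 / 2
      = (((r^2*y^2 - x^2)/2 : ℝ) : ℂ) + ((-(x*r*y) : ℝ) : ℂ) * Complex.I := by
    have hI : Complex.I ^ 2 = -1 := Complex.I_sq
    push_cast
    ring_nf
    rw [hI]
    ring
  rw [h]
  simp [← Complex.ofReal_pow]

lemma phiC_bound (s : ℂ) :
    ‖(PhiC s)‖ ≤ 1 + (Real.sqrt (2*Real.pi))⁻¹ *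
      (Real.exp (-s.re^2/2) * (|s.im| * ∫ r in (0:ℝ)..1, Real.exp (r^2 * s.im^2 / 2))) := by
  set x := s.re with hx
  set y := s.im with hy
  have hs : s = (x:ℂ) + (y:ℂ) * Complex.I := (Complex.re_add_im s).symm
  have hdiff := g_diff x y
  have hPhi : PhiC s = PhiC (x:ℂ) + (((Real.sqrt (2*Real.pi))⁻¹ : ℝ) : ℂ) *
      (((y:ℂ) * Complex.I) *
        ∫ r in (0:ℝ)..1, Complex.exp (-((x:ℂ) + (r:ℂ) * ((y:ℂ) * Complex.I)) ^ 2 / 2)) := by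
    rw [hs]
    unfold PhiC
    linear_combination (((Real.sqrt (2*Real.pi))⁻¹ : ℝ) : ℂ) * hdiff
  have habsint : ‖
        (∫ r in (0:ℝ)..1, Complex.exp (-((x:ℂ) + (r:ℂ) * ((y:ℂ) * Complex.I)) ^ 2 / 2))‖
      ≤ Real.exp (-x^2/2) * ∫ r in (0:ℝ)..1, Real.exp (r^2 * y^2 / 2) := by
    have hbd : ∀ᵐ (r : ℝ) ∂(volume.restrict (Set.uIoc (0:ℝ) 1)),
        ‖Complex.exp (-((x:ℂ) + (r:ℂ) * ((y:ℂ) * Complex.I)) ^ 2 / 2)‖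
          ≤ Real.exp ((r^2*y^2 - x^2)/2) := by
      filter_upwards with r
      rw [abs_exp_path]
    have hint : IntervalIntegrable (fun r : ℝ => Real.exp ((r^2*y^2 - x^2)/2)) volume 0 1 := by
      apply Continuous.intervalIntegrable; fun_prop
    have h1 := intervalIntegral.norm_integral_le_abs_of_norm_le hbd hint
    refine h1.trans ?_
    have heq : (∫ r in (0:ℝ)..1, Real.exp ((r^2*y^2 - x^2)/2))
        = Real.exp (-x^2/2) * ∫ r in (0:ℝ)..1, Real.exp (r^2 * y^2 / 2) := by
      rw [← intervalIntegral.integral_const_mul]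
      congr 1; funext r
      rw [← Real.exp_add]
      congr 1; ring
    rw [heq, abs_of_nonneg (mul_nonneg (Real.exp_pos _).le
      (intervalIntegral.integral_nonneg zero_le_one fun r _ => (Real.exp_pos _).le))]
  have hc : (0:ℝ) ≤ (Real.sqrt (2*Real.pi))⁻¹ := by positivity
  calc ‖(PhiC s)‖
      ≤ ‖(PhiC (x:ℂ))‖ + ‖((((Real.sqrt (2*Real.pi))⁻¹ : ℝ) : ℂ) *
        (((y:ℂ) * Complex.I) *
          ∫ r in (0:ℝ)..1, Complex.exp (-((x:ℂ) + (r:ℂ) * ((y:ℂ) * Complex.I)) ^ 2 / 2)))‖ := by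
        rw [hPhi]; exact norm_add_le _ _
    _ ≤ 1 + (Real.sqrt (2*Real.pi))⁻¹ *
        (Real.exp (-x^2/2) * (|y| * ∫ r in (0:ℝ)..1, Real.exp (r^2 * y^2 / 2))) := by
        have h2 : ‖((((Real.sqrt (2*Real.pi))⁻¹ : ℝ) : ℂ) *
            (((y:ℂ) * Complex.I) *
              ∫ r in (0:ℝ)..1, Complex.exp (-((x:ℂ) + (r:ℂ) * ((y:ℂ) * Complex.I)) ^ 2 / 2)))‖
            = (Real.sqrt (2*Real.pi))⁻¹ * (|y| * ‖
              (∫ r in (0:ℝ)..1, Complex.exp (-((x:ℂ) + (r:ℂ) * ((y:ℂ) * Complex.I)) ^ 2 / 2))‖) := by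
          simp only [norm_mul, Complex.norm_real, Real.norm_eq_abs, Complex.norm_I, mul_one,
            abs_of_nonneg hc]
          try ring
        rw [h2]
        have h3 := phiC_real_bound x
        have h4 : |y| * ‖
            (∫ r in (0:ℝ)..1, Complex.exp (-((x:ℂ) + (r:ℂ) * ((y:ℂ) * Complex.I)) ^ 2 / 2))‖
            ≤ |y| * (Real.exp (-x^2/2) * ∫ r in (0:ℝ)..1, Real.exp (r^2 * y^2 / 2)) :=
          mul_le_mul_of_nonneg_left habsint (abs_nonneg y)
        have h5 := mul_le_mul_of_nonneg_left h4 hc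
        have hre : (Real.exp (-x^2/2) * (|y| * ∫ r in (0:ℝ)..1, Real.exp (r^2 * y^2 / 2)))
            = |y| * (Real.exp (-x^2/2) * ∫ r in (0:ℝ)..1, Real.exp (r^2 * y^2 / 2)) := by ring
        rw [hre]
        linarith

lemma K_eq (y : ℝ) : |y| * ∫ r in (0:ℝ)..1, Real.exp (r^2 * y^2 / 2)
    = Real.sqrt 2 * ∫ v in (0:ℝ)..(|y|/Real.sqrt 2), Real.exp (v^2) := by
  rcases eq_or_ne y 0 with h | h
  · simp [h]
  · have hc : |y|/Real.sqrt 2 ≠ 0 := by positivity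
    have h2 : (0:ℝ) < Real.sqrt 2 := by positivity
    have := intervalIntegral.integral_comp_mul_left (fun v => Real.exp (v^2)) hc
      (a := (0:ℝ)) (b := 1)
    have heq : (fun r : ℝ => Real.exp ((|y|/Real.sqrt 2 * r)^2))
        = fun r : ℝ => Real.exp (r^2 * y^2 / 2) := by
      funext r
      congr 1
      rw [mul_pow, div_pow, Real.sq_sqrt (by norm_num : (0:ℝ) ≤ 2), sq_abs]
      ring
    rw [heq] at this
    rw [this]
    rw [mul_zero, mul_one, smul_eq_mul]
    rw [← mul_assoc]
    congr 1
    rw [inv_div]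
    field_simp
lemma dawson_eq (b : ℝ) :
    dawson (|b|/Real.sqrt 2)
      = Real.exp (-b^2/2) * ∫ v in (0:ℝ)..(|b|/Real.sqrt 2), Real.exp (v^2) := by
  unfold dawson
  congr 2
  rw [div_pow, sq_abs, Real.sq_sqrt (by norm_num : (0:ℝ) ≤ 2)]
  ring

lemma inv_sqrt2pi : (Real.sqrt (2*Real.pi))⁻¹ * Real.sqrt 2 = (Real.sqrt Real.pi)⁻¹ := by
  rw [Real.sqrt_mul (by norm_num : (0:ℝ) ≤ 2)]
  have h2 : Real.sqrt 2 ≠ 0 := by positivity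
  have hp : Real.sqrt Real.pi ≠ 0 := by positivity
  field_simp

lemma Fkern_bound (z w : ℂ) : ‖(Fkern z w)‖ ≤
    Real.exp (-‖(z - w)‖ ^ 2 / 2) +
      Real.exp (-(z - w).re ^ 2 / 2) * (Real.sqrt Real.pi)⁻¹ *
        dawson (|(z - w).im| / Real.sqrt 2) := by
  set u := -z - (starRingEnd ℂ) w with hu
  have him : u.im = -(z - w).im := by simp [hu, Complex.sub_im]; ring
  have habs : ‖(Fkern z w)‖
      = Real.exp (-‖(z - w)‖ ^ 2 / 2) * ‖(PhiC u)‖ := by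
    unfold Fkern
    rw [norm_mul, abs_exp_factor]
  set a := (z - w).re with ha
  set b := (z - w).im with hb
  set J := ∫ v in (0:ℝ)..(|b|/Real.sqrt 2), Real.exp (v^2) with hJ
  have hJ0 : 0 ≤ J :=
    intervalIntegral.integral_nonneg (by positivity) fun v _ => (Real.exp_pos _).le
  have hphi : ‖(PhiC u)‖ ≤ 1 + (Real.sqrt (2*Real.pi))⁻¹ *
      (Real.exp (-u.re^2/2) * (Real.sqrt 2 * J)) := by
    have h1 := phiC_bound u
    have h2 : |u.im| = |b| := by rw [him]; exact abs_neg _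
    have h3 : u.im^2 = b^2 := by rw [him]; ring
    rw [h2, h3] at h1
    rw [K_eq b] at h1
    exact h1
  have hsplit : Real.exp (-‖(z - w)‖ ^ 2 / 2)
      = Real.exp (-a^2/2) * Real.exp (-b^2/2) := by
    rw [← Real.exp_add]
    congr 1
    rw [Complex.sq_norm, Complex.normSq_apply, ha, hb]
    ring
  have hexp1 : Real.exp (-u.re^2/2) ≤ 1 := by
    rw [Real.exp_le_one_iff]
    nlinarith [sq_nonneg u.re]
  have key : Real.exp (-‖(z - w)‖ ^ 2 / 2) *
      ((Real.sqrt (2*Real.pi))⁻¹ * (Real.exp (-u.re^2/2) * (Real.sqrt 2 * J)))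
      ≤ Real.exp (-a^2/2) * (Real.sqrt Real.pi)⁻¹ * dawson (|b|/Real.sqrt 2) := by
    rw [hsplit, dawson_eq, ← hJ]
    calc Real.exp (-a^2/2) * Real.exp (-b^2/2) *
          ((Real.sqrt (2*Real.pi))⁻¹ * (Real.exp (-u.re^2/2) * (Real.sqrt 2 * J)))
        = (Real.exp (-a^2/2) * (Real.sqrt Real.pi)⁻¹ * (Real.exp (-b^2/2) * J)) *
            Real.exp (-u.re^2/2) := by
          rw [← inv_sqrt2pi]; ring
      _ ≤ (Real.exp (-a^2/2) * (Real.sqrt Real.pi)⁻¹ * (Real.exp (-b^2/2) * J)) * 1 := by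
          apply mul_le_mul_of_nonneg_left hexp1
          have h1 : (0:ℝ) ≤ Real.exp (-a^2/2) * (Real.sqrt Real.pi)⁻¹ := by positivity
          exact mul_nonneg h1 (mul_nonneg (Real.exp_pos _).le hJ0)
      _ = Real.exp (-a^2/2) * (Real.sqrt Real.pi)⁻¹ * (Real.exp (-b^2/2) * J) := mul_one _
  calc ‖(Fkern z w)‖
      = Real.exp (-‖(z - w)‖ ^ 2 / 2) * ‖(PhiC u)‖ := habs
    _ ≤ Real.exp (-‖(z - w)‖ ^ 2 / 2) * (1 + (Real.sqrt (2*Real.pi))⁻¹ *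
        (Real.exp (-u.re^2/2) * (Real.sqrt 2 * J))) :=
        mul_le_mul_of_nonneg_left hphi (Real.exp_pos _).le
    _ = Real.exp (-‖(z - w)‖ ^ 2 / 2) + Real.exp (-‖(z - w)‖ ^ 2 / 2) *
        ((Real.sqrt (2*Real.pi))⁻¹ * (Real.exp (-u.re^2/2) * (Real.sqrt 2 * J))) := by ring
    _ ≤ Real.exp (-‖(z - w)‖ ^ 2 / 2) +
        Real.exp (-a^2/2) * (Real.sqrt Real.pi)⁻¹ * dawson (|b|/Real.sqrt 2) := by
        linarith [key]

lemma dawson_nonneg {t : ℝ} (ht : 0 ≤ t) : 0 ≤ dawson t := by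
  unfold dawson
  exact mul_nonneg (Real.exp_pos _).le
    (intervalIntegral.integral_nonneg ht fun x _ => (Real.exp_pos _).le)

lemma dawson_le_self {t : ℝ} (ht : 0 ≤ t) : dawson t ≤ t := by
  unfold dawson
  have h1 : (∫ x in (0:ℝ)..t, Real.exp (x^2)) ≤ ∫ _x in (0:ℝ)..t, Real.exp (t^2) := by
    apply intervalIntegral.integral_mono_on ht
    · apply Continuous.intervalIntegrable; fun_prop
    · exact intervalIntegrable_const
    · intro x hx
      exact Real.exp_le_exp.2 (by nlinarith [hx.1, hx.2])
  rw [intervalIntegral.integral_const, smul_eq_mul, sub_zero] at h1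
  calc Real.exp (-t^2) * ∫ x in (0:ℝ)..t, Real.exp (x^2)
      ≤ Real.exp (-t^2) * (t * Real.exp (t^2)) :=
        mul_le_mul_of_nonneg_left h1 (Real.exp_pos _).le
    _ = t * (Real.exp (-t^2) * Real.exp (t^2)) := by ring
    _ = t := by rw [← Real.exp_add]; simp

lemma mul_dawson_le_one {t : ℝ} (ht : 0 ≤ t) : t * dawson t ≤ 1 := by
  rcases eq_or_lt_of_le ht with h | h
  · simp [← h, dawson]
  · have hne : t ≠ 0 := ne_of_gt h
    have h1 : (∫ x in (0:ℝ)..t, Real.exp (x^2)) ≤ ∫ x in (0:ℝ)..t, Real.exp (t*x) := by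
      apply intervalIntegral.integral_mono_on ht
      · apply Continuous.intervalIntegrable; fun_prop
      · apply Continuous.intervalIntegrable; fun_prop
      · intro x hx
        exact Real.exp_le_exp.2 (by nlinarith [hx.1, hx.2])
    have h2 : (∫ x in (0:ℝ)..t, Real.exp (t*x)) = t⁻¹ * (Real.exp (t^2) - 1) := by
      rw [intervalIntegral.integral_comp_mul_left Real.exp hne (a := (0:ℝ)) (b := t),
        mul_zero, integral_exp, smul_eq_mul, Real.exp_zero, ← pow_two]
    calc t * dawson t = t * (Real.exp (-t^2) * ∫ x in (0:ℝ)..t, Real.exp (x^2)) := rfl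
      _ ≤ t * (Real.exp (-t^2) * (t⁻¹ * (Real.exp (t^2) - 1))) := by
          apply mul_le_mul_of_nonneg_left _ ht
          exact mul_le_mul_of_nonneg_left (h1.trans_eq h2) (Real.exp_pos _).le
      _ = Real.exp (-t^2) * (Real.exp (t^2) - 1) := by field_simp
      _ = 1 - Real.exp (-t^2) := by
          rw [mul_sub, ← Real.exp_add]; simp
      _ ≤ 1 := by linarith [Real.exp_pos (-t^2)]

lemma dawson_le_one {t : ℝ} (ht : 0 ≤ t) : dawson t ≤ 1 := by
  rcases le_or_gt t 1 with h | h
  · exact (dawson_le_self ht).trans h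
  · calc dawson t ≤ t * dawson t := le_mul_of_one_le_left (dawson_nonneg ht) h.le
      _ ≤ 1 := mul_dawson_le_one ht

lemma self_mul_exp_le {u : ℝ} (hu : 0 ≤ u) : u * Real.exp (-u^2/2) ≤ 1 := by
  have h1 : u ≤ Real.exp (u^2/2) := by
    have := Real.add_one_le_exp (u^2/2)
    nlinarith [sq_nonneg (u-1)]
  calc u * Real.exp (-u^2/2) ≤ Real.exp (u^2/2) * Real.exp (-u^2/2) :=
        mul_le_mul_of_nonneg_right h1 (Real.exp_pos _).le
    _ = 1 := by
        have h0 : u^2/2 + -u^2/2 = 0 := by ring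
        rw [← Real.exp_add, h0, Real.exp_zero]

lemma Fkern_mul_bound (z w : ℂ) :
    ‖(z - w)‖ * ‖(Fkern z w)‖ ≤ 4 := by
  have hF := Fkern_bound z w
  set D := ‖(z - w)‖ with hDdef
  set a := (z - w).re with ha
  set b := (z - w).im with hb
  set t := |b| / Real.sqrt 2 with htdef
  set S := Real.exp (-a^2/2) * (Real.sqrt Real.pi)⁻¹ * dawson t with hSdef
  have hD0 : 0 ≤ D := norm_nonneg _
  have hmul := mul_le_mul_of_nonneg_left hF hD0
  have h1 : D * Real.exp (-D^2/2) ≤ 1 := self_mul_exp_le hD0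
  have ht0 : 0 ≤ t := by positivity
  have hd0 : 0 ≤ dawson t := dawson_nonneg ht0
  have hd1 : dawson t ≤ 1 := dawson_le_one ht0
  have hpi : (Real.sqrt Real.pi)⁻¹ ≤ 1 := by
    rw [inv_le_one_iff₀]
    right
    rw [show (1:ℝ) = Real.sqrt 1 by simp]
    exact Real.sqrt_le_sqrt (by linarith [Real.pi_gt_three])
  have hpi0 : (0:ℝ) ≤ (Real.sqrt Real.pi)⁻¹ := by positivity
  have he1 : Real.exp (-a^2/2) ≤ 1 := by
    rw [Real.exp_le_one_iff]; nlinarith [sq_nonneg a]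
  have hS0 : 0 ≤ S := by
    apply mul_nonneg (mul_nonneg (Real.exp_pos _).le hpi0) hd0
  have hSa : |a| * S ≤ 1 := by
    have h2 : |a| * Real.exp (-a^2/2) ≤ 1 := by
      have := self_mul_exp_le (abs_nonneg a)
      rwa [sq_abs] at this
    have h3 : (Real.sqrt Real.pi)⁻¹ * dawson t ≤ 1 :=
      mul_le_one₀ hpi hd0 hd1
    calc |a| * S = (|a| * Real.exp (-a^2/2)) * ((Real.sqrt Real.pi)⁻¹ * dawson t) := by
          rw [hSdef]; ring
      _ ≤ 1 * 1 := mul_le_mul h2 h3 (mul_nonneg hpi0 hd0) zero_le_one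
      _ = 1 := by norm_num
  have hSb : |b| * S ≤ Real.sqrt 2 := by
    have hbt : |b| = Real.sqrt 2 * t := by
      rw [htdef]
      field_simp
    have h4 : t * dawson t ≤ 1 := mul_dawson_le_one ht0
    have h5 : Real.exp (-a^2/2) * (Real.sqrt Real.pi)⁻¹ ≤ 1 :=
      mul_le_one₀ he1 hpi0 hpi
    calc |b| * S = (Real.sqrt 2) * ((t * dawson t) * (Real.exp (-a^2/2) * (Real.sqrt Real.pi)⁻¹)) := by
          rw [hSdef, hbt]; ring
      _ ≤ (Real.sqrt 2) * (1 * 1) := by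
          apply mul_le_mul_of_nonneg_left _ (Real.sqrt_nonneg 2)
          exact mul_le_mul h4 h5 (mul_nonneg (Real.exp_pos _).le hpi0) zero_le_one
      _ = Real.sqrt 2 := by norm_num
  have hDle : D ≤ |a| + |b| := Complex.norm_le_abs_re_add_abs_im (z - w)
  have hDS : D * S ≤ (|a| + |b|) * S := mul_le_mul_of_nonneg_right hDle hS0
  have hs2 : Real.sqrt 2 ≤ 2 := by
    nlinarith [Real.sq_sqrt (by norm_num : (0:ℝ) ≤ 2), Real.sqrt_nonneg 2]
  nlinarith [hmul, h1, hDS, hSa, hSb, hs2, hS0]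


/-- Estimates for the boundary kernel `𝐅`:
`|𝐅(z,w)| ≤ e^{−|z−w|²/2} + e^{−(Re(z−w))²/2} π^{−1/2} F(|Im(z−w)|/√2)` with `F` the
Dawson function; moreover `|z−w||𝐅(z,w)|` is uniformly bounded, and in particular
`𝐅(z,w) → 0` as `|z−w| → ∞`. -/
theorem Fkern_estimates :
    (∀ z w : ℂ, ‖(Fkern z w)‖ ≤
      Real.exp (-‖(z - w)‖ ^ 2 / 2) +
        Real.exp (-(z - w).re ^ 2 / 2) * (Real.sqrt Real.pi)⁻¹ *
          dawson (|(z - w).im| / Real.sqrt 2)) ∧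
    (∃ C : ℝ, ∀ z w : ℂ, ‖(z - w)‖ * ‖(Fkern z w)‖ ≤ C) ∧
    Tendsto (fun p : ℂ × ℂ => ‖(Fkern p.1 p.2)‖)
      (comap (fun p : ℂ × ℂ => ‖(p.1 - p.2)‖) atTop) (nhds 0) := by
  refine ⟨Fkern_bound, ⟨4, Fkern_mul_bound⟩, ?_⟩
  have h1 : ∀ᶠ p : ℂ × ℂ in comap (fun p : ℂ × ℂ => ‖(p.1 - p.2)‖) atTop,
      1 ≤ ‖(p.1 - p.2)‖ :=
    tendsto_comap.eventually (eventually_ge_atTop 1)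
  have hle : ∀ᶠ p : ℂ × ℂ in comap (fun p : ℂ × ℂ => ‖(p.1 - p.2)‖) atTop,
      ‖(Fkern p.1 p.2)‖ ≤ 4 / ‖(p.1 - p.2)‖ := by
    filter_upwards [h1] with p hp
    rw [le_div_iff₀ (lt_of_lt_of_le one_pos hp)]
    rw [mul_comm]
    exact Fkern_mul_bound p.1 p.2
  have hnn : ∀ᶠ p : ℂ × ℂ in comap (fun p : ℂ × ℂ => ‖(p.1 - p.2)‖) atTop,
      0 ≤ ‖(Fkern p.1 p.2)‖ := by
    filter_upwards with p using norm_nonneg _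
  have htends : Tendsto (fun p : ℂ × ℂ => 4 / ‖(p.1 - p.2)‖)
      (comap (fun p : ℂ × ℂ => ‖(p.1 - p.2)‖) atTop) (nhds 0) :=
    Tendsto.div_atTop tendsto_const_nhds tendsto_comap
  exact squeeze_zero' hnn hle htends
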